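/- arXiv:2506.09004 — 4 statements merged into one kernel-verified Lean document; each statement's English description precedes it below -/
import Mathlib

section
/- If every item in a sequence has size at most α < 1, and the Dual Next Fit strategy covers m bins on this sequence, then m > |OPT(σ)|/(1+α) − 1/(1+α), where |OPT(σ)| is the maximum number of unit bins coverable by the sequence. -/
/-- State of Dual Next Fit after processing a list of items:
    (number of covered bins, load of the current active bin). -/
noncomputable def dnfState (l : List ℝ) : ℕ × ℝ :=
  l.foldl (fun s v => if 1 ≤ s.2 + v then (s.1 + 1, 0) else (s.1, s.2 + v)) (0, 0)

/-- The items of the list can (offline) cover `k` unit bins. -/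
def Covers (l : List ℝ) (k : ℕ) : Prop :=
  ∃ f : Fin l.length → ℕ,
    ∀ j < k, 1 ≤ ∑ i : Fin l.length, if f i = j then l.get i else 0

private lemma fold_bound (α : ℝ) :
    ∀ (l : List ℝ), (∀ v ∈ l, 0 < v ∧ v ≤ α) → ∀ (c : ℕ) (s : ℝ), 0 ≤ s → s < 1 →
    0 ≤ (l.foldl (fun s v => if 1 ≤ s.2 + v then (s.1 + 1, 0) else (s.1, s.2 + v)) (c, s)).2 ∧
    (l.foldl (fun s v => if 1 ≤ s.2 + v then (s.1 + 1, 0) else (s.1, s.2 + v)) (c, s)).2 < 1 ∧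
    (c : ℝ) * (1 + α) + s + l.sum ≤
      ((l.foldl (fun s v => if 1 ≤ s.2 + v then (s.1 + 1, 0) else (s.1, s.2 + v)) (c, s)).1 : ℝ)
        * (1 + α) +
      (l.foldl (fun s v => if 1 ≤ s.2 + v then (s.1 + 1, 0) else (s.1, s.2 + v)) (c, s)).2 := by
  intro l
  induction l with
  | nil => intro _ c s h0 h1; exact ⟨h0, h1, by simp⟩
  | cons v t ih =>
    intro hall c s h0 h1
    have hv := hall v List.mem_cons_self
    have ht : ∀ w ∈ t, 0 < w ∧ w ≤ α := fun w hw => hall w (List.mem_cons_of_mem v hw)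
    simp only [List.foldl_cons, List.sum_cons]
    by_cases hc : 1 ≤ s + v
    · simp only [hc, if_pos]
      obtain ⟨ih0, ih1, ih2⟩ := ih ht (c + 1) 0 le_rfl one_pos
      refine ⟨ih0, ih1, ?_⟩
      have key : (c : ℝ) * (1 + α) + s + v ≤ ((c : ℕ) + 1 : ℕ) * (1 + α) + 0 := by
        push_cast
        nlinarith [hv.2, h1]
      linarith [ih2]
    · simp only [hc, if_neg, not_false_iff]
      obtain ⟨ih0, ih1, ih2⟩ := ih ht c (s + v) (by linarith [hv.1]) (lt_of_not_ge hc)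
      exact ⟨ih0, ih1, by linarith [ih2]⟩

private lemma covers_le_sum (l : List ℝ) (hpos : ∀ v ∈ l, 0 ≤ v) (N : ℕ)
    (hN : Covers l N) : (N : ℝ) ≤ l.sum := by
  obtain ⟨f, hf⟩ := hN
  have h1 : (N : ℝ) = ∑ j ∈ Finset.range N, (1 : ℝ) := by simp
  have h2 : (N : ℝ) ≤ ∑ j ∈ Finset.range N,
      ∑ i : Fin l.length, if f i = j then l.get i else 0 := by
    rw [h1]
    exact Finset.sum_le_sum fun j hj => hf j (Finset.mem_range.mp hj)
  rw [Finset.sum_comm] at h2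
  have h3 : ∑ i : Fin l.length, ∑ j ∈ Finset.range N, (if f i = j then l.get i else 0)
      ≤ ∑ i : Fin l.length, l.get i := by
    refine Finset.sum_le_sum fun i _ => ?_
    rw [Finset.sum_ite_eq (Finset.range N) (f i) (fun _ => l.get i)]
    split_ifs with h
    · exact le_refl _
    · exact hpos _ (l.get_mem i)
  have h4 : ∑ i : Fin l.length, l.get i = l.sum := by
    exact Fin.sum_univ_getElem l
  calc (N : ℝ) ≤ _ := h2
    _ ≤ _ := h3
    _ = l.sum := h4

theorem stmt0 (α : ℝ) (hα0 : 0 < α) (hα1 : α < 1) (l : List ℝ)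
    (hitems : ∀ v ∈ l, 0 < v ∧ v < 1 ∧ v ≤ α)
    (m N : ℕ) (hm : (dnfState l).1 = m) (hN : Covers l N) :
    (N : ℝ) / (1 + α) - 1 / (1 + α) < m := by
  have hsum := covers_le_sum l (fun v hv => (hitems v hv).1.le) N hN
  obtain ⟨h0, h1, h2⟩ := fold_bound α l
    (fun v hv => ⟨(hitems v hv).1, (hitems v hv).2.2⟩) 0 0 le_rfl one_pos
  have hdnf : ((dnfState l).1 : ℝ) * (1 + α) + (dnfState l).2 = _ := rfl
  unfold dnfState at hm
  have hmain : (N : ℝ) < (m : ℝ) * (1 + α) + 1 := by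
    rw [← hm]; push_cast at h2 ⊢; linarith
  have hpos : (0 : ℝ) < 1 + α := by linarith
  rw [div_sub_div_same, div_lt_iff₀ hpos]
  linarith
end

section
/- Let G₂, G₂₂ be nonnegative integers with G₂ > 0, let β ≥ 1 satisfy G₂₂ + G₂ = β·G₂ and β < 121/107, let 0 < ε < 1 be sufficiently small, and set m_R = ⌊(1−ε)²(27G₂/121 + 2G₂₂/3)⌋ and m = ⌈(1+ε)m_R⌉, n_g = G₂ − 2m. If α ≤ 685/1452 − β/3 − δ/4 − ε/4 for some δ ≥ 0, then n_g − 3(⌊α·G₂⌋ − 2) − ⌊δ·G₂⌋ ≥ ⌊α·G₂⌋ − 1. -/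
theorem stmt6 (G2 G22 : ℕ) (hG2 : 0 < G2) (β : ℝ) (hβ1 : 1 ≤ β)
    (hβeq : (G22 : ℝ) + G2 = β * G2) (hβ2 : β < 121 / 107) :
    ∃ ε₀ : ℝ, 0 < ε₀ ∧ ∀ ε : ℝ, 0 < ε → ε < ε₀ →
      ∀ δ α : ℝ, 0 ≤ δ → α ≤ 685 / 1452 - β / 3 - δ / 4 - ε / 4 →
        (⌊α * (G2 : ℝ)⌋ - 1 : ℤ) ≤
          ((G2 : ℤ) - 2 * ⌈(1 + ε) * ((⌊(1 - ε) ^ 2 * (27 * (G2 : ℝ) / 121 + 2 * (G22 : ℝ) / 3)⌋ : ℤ) : ℝ)⌉)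
            - 3 * (⌊α * (G2 : ℝ)⌋ - 2) - ⌊δ * (G2 : ℝ)⌋ := by
  refine ⟨1, one_pos, fun ε hε hε1 δ α hδ hα => ?_⟩
  have hG2' : (0:ℝ) < G2 := by exact_mod_cast hG2
  set c : ℝ := 27 * (G2 : ℝ) / 121 + 2 * (G22 : ℝ) / 3 with hc
  clear_value c
  have hc0 : (0:ℝ) ≤ c := by rw [hc]; positivity
  have h1 : ((⌊(1 - ε) ^ 2 * c⌋ : ℤ) : ℝ) ≤ (1 - ε) ^ 2 * c := Int.floor_le _
  have h2 : ((⌈(1 + ε) * ((⌊(1 - ε) ^ 2 * c⌋ : ℤ) : ℝ)⌉ : ℤ) : ℝ) <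
      (1 + ε) * ((⌊(1 - ε) ^ 2 * c⌋ : ℤ) : ℝ) + 1 := Int.ceil_lt_add_one _
  have h3 : (1 + ε) * ((⌊(1 - ε) ^ 2 * c⌋ : ℤ) : ℝ) ≤ (1 + ε) * ((1 - ε) ^ 2 * c) := by
    nlinarith
  have h4 : (1 + ε) * ((1 - ε) ^ 2 * c) ≤ c := by
    nlinarith [mul_nonneg hc0 hε.le, mul_nonneg (mul_nonneg hc0 hε.le) (mul_nonneg hε.le (by linarith : (0:ℝ) ≤ 1 - ε))]
  have hA : ((⌊α * (G2:ℝ)⌋ : ℤ) : ℝ) ≤ α * G2 := Int.floor_le _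
  have hD : ((⌊δ * (G2:ℝ)⌋ : ℤ) : ℝ) ≤ δ * G2 := Int.floor_le _
  have hβG : (G22 : ℝ) = (β - 1) * G2 := by linarith
  have hαG : α * (G2:ℝ) ≤ (685 / 1452 - β / 3 - δ / 4 - ε / 4) * G2 :=
    mul_le_mul_of_nonneg_right hα hG2'.le
  have hM : ((⌈(1 + ε) * ((⌊(1 - ε) ^ 2 * c⌋ : ℤ) : ℝ)⌉ : ℤ) : ℝ) < c + 1 := by linarith
  have h2c : 2 * c = (54 / 121 + 4 * (β - 1) / 3) * G2 := by rw [hc, hβG]; ring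
  have hkey : 4 * (α * (G2:ℝ)) + 2 * c + δ * G2 ≤ (1 - ε) * G2 := by
    have := hαG
    nlinarith [mul_nonneg hε.le hG2'.le]
  rw [← @Int.cast_le ℝ]
  push_cast
  linarith [mul_nonneg hε.le hG2'.le]
end

section
/- Let W be a finite multiset of positive reals ('white items'), each less than d' where d' ≥ d > 0, and let m_W bins be filled by Dual Worst Fit (each arriving item goes to the bin with the current smallest total). Suppose the total S_W of all items in W satisfies S_W ≥ 2·m_W·d + Σ_{i=1}^{l}(a_i − d), where a_1,…,a_l are the sizes of the items of size ≥ d and l < m_W. Then after processing all of W it is impossible that some bin has total less than d; i.e., every one of the m_W bins contains items of total at least d. -/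
lemma filter_map_sum {M : Type*} [AddCommMonoid M] (p : ℝ → Prop) [DecidablePred p]
    (f : ℝ → M) (l : List ℝ) :
    ∑ i ∈ (Finset.range l.length).filter (fun i => p (l.getD i 0)), f (l.getD i 0)
      = ((l.filter (fun v => decide (p v))).map f).sum := by
  induction l with
  | nil => simp
  | cons a t ih =>
    rw [Finset.sum_filter] at *
    rw [List.length_cons, Finset.sum_range_succ']
    simp only [List.getD_cons_succ, List.getD_cons_zero]
    rw [ih, List.filter_cons]
    by_cases hp : p a <;> simp [hp, add_comm]

/-- A run of Dual Worst Fit over `m` bins on the item list `items`: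
    each arriving item is placed into a bin of currently smallest total,
    and `final` is the resulting vector of bin contents. -/
def IsDWFRun (m : ℕ) (items : List ℝ) (final : Fin m → ℝ) : Prop :=
  ∃ s : ℕ → Fin m → ℝ,
    s 0 = (fun _ => 0) ∧
    (∀ i, i < items.length →
      ∃ j : Fin m, (∀ k, s i j ≤ s i k) ∧
        s (i + 1) = Function.update (s i) j (s i j + items.getD i 0)) ∧
    final = s items.length

theorem stmt7 (d d' : ℝ) (hd : 0 < d) (hdd' : d ≤ d')
    (m_W : ℕ) (items : List ℝ)
    (hpos : ∀ v ∈ items, 0 < v) (hlt : ∀ v ∈ items, v < d')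
    (hbig : (items.filter fun v => decide (d ≤ v)).length < m_W)
    (hSW : 2 * m_W * d +
        ((items.filter fun v => decide (d ≤ v)).map fun v => v - d).sum ≤ items.sum)
    (final : Fin m_W → ℝ) (hrun : IsDWFRun m_W items final) :
    ∀ j, d ≤ final j := by
  classical
  obtain ⟨s, h0, hstep, hfinal⟩ := hrun
  set n := items.length with hn
  have hm : 0 < m_W := lt_of_le_of_lt (Nat.zero_le _) hbig
  set a : ℕ → ℝ := fun i => items.getD i 0 with ha
  have hapos : ∀ i, i < n → 0 < a i := by
    intro i hi
    have : a i = items[i] := List.getD_eq_getElem items 0 hi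
    rw [this]; exact hpos _ (List.getElem_mem hi)
  choose c hcmin hcupd using hstep
  -- monotonicity
  have hstep_le : ∀ i (hi : i < n) k, s i k ≤ s (i+1) k := by
    intro i hi k
    rw [hcupd i hi]
    rcases eq_or_ne k (c i hi) with rfl | hne
    · rw [Function.update_self]
      have := hapos i hi; linarith
    · rw [Function.update_of_ne hne]
  have hmono : ∀ k i j, i ≤ j → j ≤ n → s i k ≤ s j k := by
    intro k i j hij
    induction j, hij using Nat.le_induction with
    | base => intro _; exact le_refl _
    | succ j hij ih =>
      intro hj
      exact le_trans (ih (by omega)) (hstep_le j (by omega) k)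
  -- sum identity
  have hsumstep : ∀ i (hi : i < n), ∑ k, s (i+1) k = (∑ k, s i k) + a i := by
    intro i hi
    rw [hcupd i hi, Finset.sum_update_of_mem (Finset.mem_univ _)]
    rw [Finset.sdiff_singleton_eq_erase, ← Finset.sum_erase_add Finset.univ _
      (Finset.mem_univ (c i hi))]
    ring
  have hsum : ∀ i, i ≤ n → ∑ k, s i k = (items.take i).sum := by
    intro i
    induction i with
    | zero => intro _; simp [h0]
    | succ i ih =>
      intro hi
      have hi' : i < n := hi
      rw [hsumstep i hi', ih (le_of_lt hi'), List.sum_take_succ items i hi']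
      congr 1
      exact List.getD_eq_getElem items 0 hi'
  have htotal : ∑ k, final k = items.sum := by
    rw [hfinal, hsum n le_rfl, List.take_length]
  -- contradiction setup
  by_contra hcon
  push_neg at hcon
  obtain ⟨j0, hj0⟩ := hcon
  have hlow : ∀ i, i ≤ n → s i j0 < d := by
    intro i hi
    have := hmono j0 i n hi le_rfl
    rw [← hfinal] at this
    linarith
  set c' : ℕ → Fin m_W := fun i => if h : i < n then c i h else ⟨0, hm⟩ with hc'
  have hc'eq : ∀ i (hi : i < n), c' i = c i hi := by
    intro i hi; simp [hc', dif_pos hi]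
  set I : Fin m_W → Finset ℕ := fun k => (Finset.range n).filter (fun i => c' i = k) with hI
  set L : Fin m_W → ℕ := fun k => if h : (I k).Nonempty then (I k).max' h else 0 with hL
  -- no-update between
  have hnoup : ∀ k m₁ m₂, m₁ ≤ m₂ → m₂ ≤ n → (∀ i, m₁ ≤ i → i < m₂ → c' i ≠ k) →
      s m₂ k = s m₁ k := by
    intro k m₁ m₂ hle
    induction m₂, hle using Nat.le_induction with
    | base => intro _ _; rfl
    | succ j hij ih =>
      intro hj hne
      have hjn : j < n := hj
      rw [hcupd j hjn, Function.update_of_ne]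
      · exact ih (by omega) (fun i h1 h2 => hne i h1 (by omega))
      · rw [← hc'eq j hjn]
        exact fun h => hne j hij (by omega) h.symm
  have hfinempty : ∀ k, ¬ (I k).Nonempty → final k = 0 := by
    intro k hk
    rw [hfinal, hnoup k 0 n (Nat.zero_le _) le_rfl, h0]
    intro i _ hi hik
    exact hk ⟨i, by simp [hI, Finset.mem_filter, Finset.mem_range, hi, hik]⟩
  have hLmem : ∀ k (h : (I k).Nonempty), L k ∈ I k := by
    intro k h; rw [hL]; simp only [dif_pos h]; exact (I k).max'_mem h
  have hLmax : ∀ k (h : (I k).Nonempty), ∀ i ∈ I k, i ≤ L k := by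
    intro k h i hi
    simp only [hL, dif_pos h]
    exact Finset.le_max' _ i hi
  have hfinne : ∀ k, (I k).Nonempty → final k < d + a (L k) := by
    intro k hk
    have hmem := hLmem k hk
    have hLn : L k < n := by
      have := hmem; rw [hI] at this
      simpa using (Finset.mem_filter.mp this).1
    have hck : c' (L k) = k := by
      have := hmem; rw [hI] at this
      simpa using (Finset.mem_filter.mp this).2
    have hsn : s n k = s (L k + 1) k := by
      apply hnoup k (L k + 1) n (by omega) le_rfl
      intro i h1 h2 hik
      have : i ∈ I k := by simp [hI, Finset.mem_filter, Finset.mem_range, h2, hik]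
      have := hLmax k hk i this
      omega
    have hck' : c (L k) hLn = k := by rw [← hc'eq (L k) hLn]; exact hck
    have hs1 : s (L k + 1) k = s (L k) k + a (L k) := by
      rw [hcupd (L k) hLn, hck', Function.update_self]
    have hmin : s (L k) k ≤ s (L k) j0 := by
      have := hcmin (L k) hLn j0
      rwa [hck'] at this
    have hlt' : s (L k) j0 < d := hlow (L k) (by omega)
    rw [hfinal, hsn, hs1]
    linarith
  set g : Fin m_W → ℝ := fun k => if (I k).Nonempty ∧ d ≤ a (L k) then a (L k) - d else 0
    with hg
  have hbound : ∀ k, final k < 2 * d + g k := by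
    intro k
    by_cases hk : (I k).Nonempty
    · have h1 := hfinne k hk
      by_cases h2 : d ≤ a (L k)
      · rw [hg]; simp only [if_pos (And.intro hk h2)]; linarith
      · rw [hg]; simp only [if_neg (fun h : _ ∧ _ => h2 h.2)]
        push_neg at h2; linarith
    · rw [hfinempty k hk, hg]
      simp only [if_neg (fun h : _ ∧ _ => hk h.1)]
      linarith
  -- strict sum inequality
  have hstrict : items.sum < 2 * m_W * d + ∑ k, g k := by
    rw [← htotal]
    haveI : Nonempty (Fin m_W) := ⟨⟨0, hm⟩⟩
    have := Finset.sum_lt_sum_of_nonempty (Finset.univ_nonempty (α := Fin m_W)) (fun k _ => hbound k)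
    calc ∑ k, final k < ∑ k : Fin m_W, (2 * d + g k) := this
    _ = 2 * m_W * d + ∑ k, g k := by
        rw [Finset.sum_add_distrib, Finset.sum_const, Finset.card_univ, Fintype.card_fin]
        push_cast; ring
  -- bound sum g by big items
  set bigIdx : Finset ℕ := (Finset.range n).filter (fun i => d ≤ a i) with hbigIdx
  set T : Finset (Fin m_W) := Finset.univ.filter (fun k => (I k).Nonempty ∧ d ≤ a (L k))
    with hT
  have hgsum : ∑ k, g k = ∑ k ∈ T, (a (L k) - d) := by
    rw [hT, hg, Finset.sum_filter]
  have hinj : ∀ k1 ∈ T, ∀ k2 ∈ T, L k1 = L k2 → k1 = k2 := by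
    intro k1 h1 k2 h2 he
    have h1' := (Finset.mem_filter.mp h1).2.1
    have h2' := (Finset.mem_filter.mp h2).2.1
    have m1 := hLmem k1 h1'
    have m2 := hLmem k2 h2'
    rw [hI] at m1 m2
    have e1 := (Finset.mem_filter.mp m1).2
    have e2 := (Finset.mem_filter.mp m2).2
    rw [he] at e1
    exact e1.symm.trans e2
  have himg : T.image L ⊆ bigIdx := by
    intro i hi
    obtain ⟨k, hk, rfl⟩ := Finset.mem_image.mp hi
    have hk' := (Finset.mem_filter.mp hk).2
    have hmem := hLmem k hk'.1
    rw [hI] at hmem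
    rw [hbigIdx]
    exact Finset.mem_filter.mpr ⟨(Finset.mem_filter.mp hmem).1, hk'.2⟩
  have hgle : ∑ k, g k ≤ ∑ i ∈ bigIdx, (a i - d) := by
    rw [hgsum]
    have h1 : ∑ k ∈ T, (a (L k) - d) = ∑ i ∈ T.image L, (a i - d) :=
      (Finset.sum_image (f := fun i => a i - d) hinj).symm
    rw [h1]
    apply Finset.sum_le_sum_of_subset_of_nonneg himg
    intro i hi _
    have := (Finset.mem_filter.mp hi).2
    linarith
  have hbigeq : ∑ i ∈ bigIdx, (a i - d)
      = ((items.filter fun v => decide (d ≤ v)).map fun v => v - d).sum := by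
    rw [hbigIdx, ha]
    exact filter_map_sum (fun v => d ≤ v) (fun v => v - d) items
  rw [hbigeq] at hgle
  linarith
end

section
/- Let d, ε be reals with d ≥ ε > 0 and ε sufficiently small, let b satisfy 1/2^{b/2} < ε (so 1/2^b < ε²), and let m_R, m_B, m_RB, x_B, e_B be nonnegative reals with m_B = x_B + ⌊e_B⌋_b, ⌊m_B⌋_b ≥ (1−ε)m_B, ⌊e_B⌋_b ≥ (1−ε)e_B, x_B + e_B = m_RB, ⌊m_R⌋_b ≤ m_R, and m = ⌈(1+ε)m_R⌉. Define d' satisfying d ≤ d' ≤ d + 1/2^b and m_W = ⌊m_R⌋_b − ⌊m_B⌋_b. Then 2d'·m_W ≤ d(2m − m_RB). -/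
lemma stmt8_aux (d ε d' m_R m_RB : ℝ) (hd0 : 0 < d) (hd1 : d ≤ d')
    (hdε : d' ≤ d * (1 + ε)) (hε : 0 < ε) (hε4 : ε < 1/4)
    (hmR : 0 ≤ m_R) (hmRB : 0 ≤ m_RB) :
    2 * d' * (m_R - (1 - ε) ^ 2 * m_RB) ≤ d * (2 * ((1 + ε) * m_R) - m_RB) := by
  rcases le_or_gt 0 (m_R - (1 - ε) ^ 2 * m_RB) with h | h
  · have s1 : 2 * d' * (m_R - (1 - ε) ^ 2 * m_RB)
        ≤ 2 * (d * (1 + ε)) * (m_R - (1 - ε) ^ 2 * m_RB) := by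
      apply mul_le_mul_of_nonneg_right _ h
      linarith
    have coef : (1:ℝ) ≤ 2 * (1 + ε) * (1 - ε) ^ 2 := by nlinarith
    have s2 : 2 * (d * (1 + ε)) * (m_R - (1 - ε) ^ 2 * m_RB)
        ≤ d * (2 * ((1 + ε) * m_R) - m_RB) := by
      nlinarith [mul_nonneg hd0.le hmRB, mul_nonneg (mul_nonneg hd0.le hmRB) (sq_nonneg (1 - ε))]
    linarith
  · have s1 : 2 * d' * (m_R - (1 - ε) ^ 2 * m_RB)
        ≤ 2 * d * (m_R - (1 - ε) ^ 2 * m_RB) := by nlinarith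
    have c2 : (1:ℝ) ≤ 2 * (1 - ε) ^ 2 := by nlinarith
    have s2 : 2 * d * (m_R - (1 - ε) ^ 2 * m_RB)
        ≤ d * (2 * ((1 + ε) * m_R) - m_RB) := by
      nlinarith [mul_nonneg (mul_nonneg hd0.le hε.le) hmR,
        mul_le_mul_of_nonneg_left c2 (mul_nonneg hd0.le hmRB)]
    linarith

theorem stmt8 :
    ∃ ε₀ : ℝ, 0 < ε₀ ∧
      ∀ (b : ℕ) (d ε d' m_R m_B m_RB x_B e_B dnmR dnmB dneB : ℝ),
        0 < ε → ε < ε₀ → ε ≤ d →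
        1 / (2 : ℝ) ^ ((b : ℝ) / 2) < ε →
        0 ≤ m_R → 0 ≤ m_B → 0 ≤ m_RB → 0 ≤ x_B → 0 ≤ e_B →
        m_B = x_B + dneB →
        (1 - ε) * m_B ≤ dnmB → dnmB ≤ m_B →
        (1 - ε) * e_B ≤ dneB → dneB ≤ e_B →
        x_B + e_B = m_RB →
        dnmR ≤ m_R →
        d ≤ d' → d' ≤ d + 1 / 2 ^ b →
        2 * d' * (dnmR - dnmB) ≤ d * (2 * ((⌈(1 + ε) * m_R⌉ : ℤ) : ℝ) - m_RB) := by
  refine ⟨1/4, by norm_num, ?_⟩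
  intro b d ε d' m_R m_B m_RB x_B e_B dnmR dnmB dneB
  intro hε hε4 hεd hb hmR hmB hmRB hxB heB hmBeq hmB1 hmB2 heB1 heB2 hxe hmR1 hd1 hd2
  have hceil : (1 + ε) * m_R ≤ ((⌈(1 + ε) * m_R⌉ : ℤ) : ℝ) := Int.le_ceil _
  have hpow : (0 : ℝ) < (2 : ℝ) ^ ((b : ℝ) / 2) := by positivity
  have hsq : ((2 : ℝ) ^ ((b : ℝ) / 2)) ^ 2 = 2 ^ b := by
    rw [← Real.rpow_natCast ((2:ℝ) ^ ((b:ℝ)/2)) 2, ← Real.rpow_mul (by norm_num)]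
    rw [show (b:ℝ) / 2 * (2:ℕ) = (b:ℝ) by push_cast; ring, Real.rpow_natCast]
  have h2b : (1 : ℝ) / 2 ^ b < ε ^ 2 := by
    have h1 : (1 : ℝ) / 2 ^ b = (1 / (2 : ℝ) ^ ((b : ℝ) / 2)) ^ 2 := by
      rw [div_pow, one_pow, hsq]
    have h2 : (0:ℝ) ≤ 1 / (2 : ℝ) ^ ((b : ℝ) / 2) := by positivity
    rw [h1]
    nlinarith
  have hd0 : 0 < d := lt_of_lt_of_le hε hεd
  have hdε : d' ≤ d * (1 + ε) := by nlinarith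
  have h1ε : (0:ℝ) ≤ 1 - ε := by linarith
  have hkey : dnmR - dnmB ≤ m_R - (1 - ε) ^ 2 * m_RB := by
    nlinarith [mul_le_mul_of_nonneg_left heB1 h1ε, mul_nonneg (mul_nonneg hε.le h1ε) hxB]
  have hd'0 : 0 < d' := lt_of_lt_of_le hd0 hd1
  have A : 2 * d' * (dnmR - dnmB) ≤ 2 * d' * (m_R - (1 - ε) ^ 2 * m_RB) := by
    apply mul_le_mul_of_nonneg_left hkey
    positivity
  have B := stmt8_aux d ε d' m_R m_RB hd0 hd1 hdε hε hε4 hmR hmRB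
  have C : d * (2 * ((1 + ε) * m_R) - m_RB)
      ≤ d * (2 * ((⌈(1 + ε) * m_R⌉ : ℤ) : ℝ) - m_RB) := by
    apply mul_le_mul_of_nonneg_left _ hd0.le
    linarith
  linarith
end
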